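/- If T solves −k ΔT = 0 in Ω with −k ∂T/∂n = h_bl (T − T_bl) on Γ_body and −k ∂T/∂n = (h_amb + h_r)(T − T_amb) + E on Γ_amb, where all coefficients are positive, E ≥ 0, and T_amb ≤ T_bl, then T ≤ T_bl everywhere in Ω. -/

import Mathlib

open MeasureTheory Real Set

/-- Partial derivative in direction `i`. -/
noncomputable def pd (f : (Fin 3 → ℝ) → ℝ) (i : Fin 3) (x : Fin 3 → ℝ) : ℝ :=
  fderiv ℝ f x (Pi.single i 1)

/-- Divergence of a vector field on `ℝ³`. -/
noncomputable def vdiv (u : (Fin 3 → ℝ) → (Fin 3 → ℝ)) (x : Fin 3 → ℝ) : ℝ :=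
  ∑ i, pd (fun y => u y i) i x

/-- Laplacian of a scalar field on `ℝ³`. -/
noncomputable def lap (f : (Fin 3 → ℝ) → ℝ) (x : Fin 3 → ℝ) : ℝ :=
  ∑ i, pd (pd f i) i x

/-- Euclidean norm of a vector in `ℝ³`. -/
noncomputable def enorm3 (g : Fin 3 → ℝ) : ℝ := Real.sqrt (∑ i, g i ^ 2)

/-- `n` is a unit outward-pointing normal field on the boundary of `Ω`. -/
def IsOutwardNormal (Ω : Set (Fin 3 → ℝ)) (n : (Fin 3 → ℝ) → (Fin 3 → ℝ)) : Prop :=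
  ∀ x ∈ frontier Ω, enorm3 (n x) = 1 ∧
    ∃ ε > 0, ∀ t ∈ Set.Ioo (0:ℝ) ε, x + t • n x ∉ closure Ω ∧ x - t • n x ∈ Ω

open Filter

lemma line_hasDerivAt (f : (Fin 3 → ℝ) → ℝ) (p v : Fin 3 → ℝ) (t₀ : ℝ)
    (hf : DifferentiableAt ℝ f (p + t₀ • v)) :
    HasDerivAt (fun t : ℝ => f (p + t • v)) (fderiv ℝ f (p + t₀ • v) v) t₀ := by
  have hφ : HasDerivAt (fun t : ℝ => p + t • v) v t₀ := by
    simpa using ((hasDerivAt_id t₀).smul_const v).const_add p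
  exact hf.hasFDerivAt.comp_hasDerivAt t₀ hφ

lemma secondDeriv_nonpos_of_isLocalMax {f f' : ℝ → ℝ} {c : ℝ}
    (hd : ∀ᶠ t in nhds (0:ℝ), HasDerivAt f (f' t) t)
    (hd2 : HasDerivAt f' c 0) (hmax : IsLocalMax f 0) : c ≤ 0 := by
  by_contra hc
  push_neg at hc
  have hf'0 : f' 0 = 0 := by
    have h := hmax.deriv_eq_zero
    rwa [hd.self_of_nhds.deriv] at h
  have hslope : Tendsto (fun t => f' t / t) (nhdsWithin 0 {(0:ℝ)}ᶜ) (nhds c) := by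
    have h := hasDerivAt_iff_tendsto_slope.1 hd2
    refine h.congr' ?_
    filter_upwards [self_mem_nhdsWithin] with t ht
    simp [slope_def_field, hf'0]
  have hpos : ∀ᶠ t in nhds (0:ℝ), t ≠ 0 → 0 < f' t / t := by
    have := hslope.eventually (eventually_gt_nhds hc)
    rwa [eventually_nhdsWithin_iff] at this
  obtain ⟨δ, hδ, hall⟩ := Metric.eventually_nhds_iff.1 ((hd.and hmax).and hpos)
  set a := δ/2 with ha
  have hapos : 0 < a := by positivity
  have hmemδ : ∀ t ∈ Icc (0:ℝ) a, dist t 0 < δ := by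
    intro t ht
    rw [Real.dist_eq, sub_zero, abs_of_nonneg ht.1]
    linarith [ht.2]
  have hmono : StrictMonoOn f (Icc 0 a) := by
    refine strictMonoOn_of_deriv_pos (convex_Icc 0 a) ?_ ?_
    · intro t ht
      exact ((hall (hmemδ t ht)).1.1.differentiableAt.continuousAt).continuousWithinAt
    · intro t ht
      rw [interior_Icc] at ht
      have h := hall (hmemδ t ⟨ht.1.le, ht.2.le⟩)
      have hfp : 0 < f' t := by
        rcases div_pos_iff.1 (h.2 ht.1.ne') with ⟨h1, _⟩ | ⟨_, h2⟩
        · exact h1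
        · linarith [ht.1]
      rwa [h.1.1.deriv]
  have h1 : f 0 < f a := hmono ⟨le_rfl, hapos.le⟩ ⟨hapos.le, le_rfl⟩ hapos
  have h2 : f a ≤ f 0 := (hall (hmemδ a ⟨hapos.le, le_rfl⟩)).1.2
  linarith

/-- the ocular temperature never exceeds the blood temperature. -/
theorem stmt_5 (Ω : Set (Fin 3 → ℝ)) (hΩo : IsOpen Ω) (hΩb : Bornology.IsBounded Ω)
    (Γbody Γamb : Set (Fin 3 → ℝ))
    (hΓ : Γbody ∪ Γamb = frontier Ω) (hΓdisj : Disjoint Γbody Γamb)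
    (k hbl hamb hr E Tbl Tamb : ℝ)
    (hk : 0 < k) (hhbl : 0 < hbl) (hhamb : 0 < hamb) (hhr : 0 < hr)
    (hE : 0 ≤ E) (hTT : Tamb ≤ Tbl)
    (n : (Fin 3 → ℝ) → (Fin 3 → ℝ)) (hn : IsOutwardNormal Ω n)
    (T : (Fin 3 → ℝ) → ℝ) (hT : ContDiffOn ℝ 2 T Ω) (hT1 : ContDiffOn ℝ 1 T (closure Ω))
    (heq : ∀ x ∈ Ω, -(k * lap T x) = 0)
    (hRbody : ∀ x ∈ Γbody, -(k * ∑ i, n x i * pd T i x) = hbl * (T x - Tbl))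
    (hRamb : ∀ x ∈ Γamb, -(k * ∑ i, n x i * pd T i x) = (hamb + hr) * (T x - Tamb) + E) :
    ∀ x ∈ Ω, T x ≤ Tbl := by
  intro x hx
  have hcl : IsCompact (closure Ω) := hΩb.isCompact_closure
  have hTc : ContinuousOn T (closure Ω) := hT1.continuousOn
  set q : (Fin 3 → ℝ) → ℝ := fun y => ∑ i, y i ^ 2 with hqdef
  have hqc : Continuous q := by
    apply continuous_finset_sum
    intro i _
    exact (continuous_apply i).pow 2
  have hq0 : ∀ y, 0 ≤ q y := fun y => Finset.sum_nonneg fun i _ => sq_nonneg _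
  -- frontier is nonempty and compact
  have hne_univ : Ω ≠ univ := by
    intro h
    have : IsCompact (univ : Set (Fin 3 → ℝ)) := by
      have := hcl
      rwa [h, closure_univ] at this
    exact noncompact_univ (Fin 3 → ℝ) this
  have hfrne : (frontier Ω).Nonempty := nonempty_frontier_iff.2 ⟨⟨x, hx⟩, hne_univ⟩
  have hfrcpt : IsCompact (frontier Ω) :=
    hcl.of_isClosed_subset isClosed_frontier frontier_subset_closure
  obtain ⟨x₀, hx₀, hx₀max⟩ :=
    hfrcpt.exists_isMaxOn hfrne (hTc.mono frontier_subset_closure)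
  obtain ⟨w, hw, hwmax⟩ := hcl.exists_isMaxOn ⟨x, subset_closure hx⟩ hqc.continuousOn
  -- interior maximum is impossible for the perturbed function
  have hTdiff : ∀ y ∈ Ω, DifferentiableAt ℝ T y := fun y hy =>
    (hT.contDiffAt (hΩo.mem_nhds hy)).differentiableAt (by norm_num)
  have hint : ∀ ε > 0, ∀ z ∈ Ω, ¬ IsMaxOn (fun y => T y + ε * q y) (closure Ω) z := by
    intro ε hε z hz hzmax
    have hptw : ∀ᶠ y in nhds z, T y + ε * q y ≤ T z + ε * q z :=
      Filter.eventually_of_mem (hΩo.mem_nhds hz) fun y hy => hzmax (subset_closure hy)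
    have hdir : ∀ i : Fin 3, pd (pd T i) i z + ε * 2 ≤ 0 := by
      intro i
      set v : Fin 3 → ℝ := Pi.single i (1:ℝ) with hv
      set φ : ℝ → (Fin 3 → ℝ) := fun t => z + t • v with hφ
      have hφc : Continuous φ := by
        apply continuous_const.add
        exact continuous_id.smul continuous_const
      have hφ0 : φ 0 = z := by simp [hφ]
      have hqline : ∀ t, q (φ t) = q z + 2 * z i * t + t ^ 2 := by
        intro t
        simp only [hqdef, hφ, Pi.add_apply, Pi.smul_apply, smul_eq_mul]
        have h1 : ∀ j, (z j + t * v j) ^ 2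
            = z j ^ 2 + (2 * z j * v j) * t + (v j ^ 2) * t ^ 2 := by intro j; ring
        rw [Finset.sum_congr rfl fun j _ => h1 j, Finset.sum_add_distrib,
          Finset.sum_add_distrib, ← Finset.sum_mul, ← Finset.sum_mul]
        have h2 : ∑ j, 2 * z j * v j = 2 * z i := by
          rw [Finset.sum_eq_single i]
          · simp [hv]
          · intro j _ hj
            simp [hv, Pi.single_eq_of_ne hj]
          · simp
        have h3 : ∑ j, v j ^ 2 = 1 := by
          rw [Finset.sum_eq_single i]
          · simp [hv]
          · intro j _ hj
            simp [hv, Pi.single_eq_of_ne hj]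
          · simp
        rw [h2, h3, one_mul]
      have hpddiff : DifferentiableAt ℝ (pd T i) z := by
        have h2 : ContDiffAt ℝ 2 T z := hT.contDiffAt (hΩo.mem_nhds hz)
        have h3 := h2.fderiv_right (m := 1) (by norm_num)
        exact (h3.clm_apply contDiffAt_const).differentiableAt one_ne_zero
      set F : ℝ → ℝ := fun t => pd T i (φ t) + ε * (2 * z i + 2 * t) with hF
      set g : ℝ → ℝ := fun t => T (φ t) + ε * (q z + 2 * z i * t + t ^ 2) with hg
      have hg_ev : ∀ᶠ t in nhds (0:ℝ), HasDerivAt g (F t) t := by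
        have hpre : φ ⁻¹' Ω ∈ nhds (0:ℝ) := by
          apply hφc.continuousAt.preimage_mem_nhds
          rw [hφ0]
          exact hΩo.mem_nhds hz
        filter_upwards [hpre] with t ht
        have hT' : HasDerivAt (fun s : ℝ => T (z + s • v)) (fderiv ℝ T (φ t) v) t :=
          line_hasDerivAt T z v t (hTdiff _ ht)
        have hfe : fderiv ℝ T (φ t) v = pd T i (φ t) := rfl
        have hpoly : HasDerivAt (fun s : ℝ => ε * (q z + 2 * z i * s + s ^ 2))
            (ε * (2 * z i + 2 * t)) t := by
          have := (((hasDerivAt_id t).const_mul (2 * z i)).const_add (q z)).add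
            (hasDerivAt_pow 2 t)
          have := this.const_mul ε
          exact this.congr_deriv (by norm_num)
        have := (hfe ▸ hT').add hpoly
        exact this
      have hF0 : HasDerivAt F (pd (pd T i) i z + ε * 2) 0 := by
        have h1 : HasDerivAt (fun s : ℝ => pd T i (z + s • v))
            (fderiv ℝ (pd T i) (z + (0:ℝ) • v) v) 0 :=
          line_hasDerivAt (pd T i) z v 0 (by simpa using hpddiff)
        have h1' : HasDerivAt (fun s : ℝ => pd T i (φ s)) (pd (pd T i) i z) 0 := by
          have he : fderiv ℝ (pd T i) (z + (0:ℝ) • v) v = pd (pd T i) i z := by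
            simp only [zero_smul, add_zero]
            rfl
          exact he ▸ h1
        have h2 : HasDerivAt (fun s : ℝ => ε * (2 * z i + 2 * s)) (ε * 2) 0 := by
          have := (((hasDerivAt_id (0:ℝ)).const_mul 2).const_add (2 * z i)).const_mul ε
          exact this.congr_deriv (by ring)
        exact h1'.add h2
      have hgmax : IsLocalMax g 0 := by
        have htend : Tendsto φ (nhds 0) (nhds z) := hφ0 ▸ hφc.continuousAt
        have := htend.eventually hptw
        filter_upwards [this] with t ht
        have : g t = T (φ t) + ε * q (φ t) := by rw [hg]; rw [hqline]
        rw [this]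
        have hg0 : g 0 = T z + ε * q z := by simp [hg, hφ0]
        rw [hg0]
        exact ht
      exact secondDeriv_nonpos_of_isLocalMax hg_ev hF0 hgmax
    have hsum := Finset.sum_le_sum (fun i (_ : i ∈ Finset.univ) => hdir i)
    rw [Finset.sum_add_distrib] at hsum
    have hlap : lap T z = 0 := by
      have := heq z hz
      have : k * lap T z = 0 := by linarith
      exact (mul_eq_zero.1 this).resolve_left hk.ne'
    rw [show (∑ i : Fin 3, pd (pd T i) i z) = lap T z from rfl, hlap] at hsum
    simp at hsum
    linarith
  -- weak maximum principle
  have hkey : ∀ y ∈ closure Ω, T y ≤ T x₀ := by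
    intro y hy
    have hstep : ∀ ε > 0, T y ≤ T x₀ + ε * q w := by
      intro ε hε
      obtain ⟨z, hzcl, hzmax⟩ := hcl.exists_isMaxOn ⟨y, hy⟩
        (hTc.add (continuousOn_const.mul hqc.continuousOn))
      have hzfr : z ∈ frontier Ω := by
        by_cases hzΩ : z ∈ Ω
        · exact absurd hzmax (hint ε hε z hzΩ)
        · exact ⟨hzcl, by rwa [hΩo.interior_eq]⟩
      have h1 : T y + ε * q y ≤ T z + ε * q z := hzmax hy
      have h2 : T z ≤ T x₀ := hx₀max hzfr
      have h3 : q z ≤ q w := hwmax hzcl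
      nlinarith [hq0 y]
    refine le_of_forall_pos_le_add fun ε' hε' => ?_
    have h := hstep (ε' / (q w + 1)) (by positivity)
    have : ε' / (q w + 1) * q w ≤ ε' := by
      rw [div_mul_eq_mul_div, div_le_iff₀ (by linarith [hq0 w])]
      nlinarith [hq0 w]
    linarith
  -- Hopf-type boundary argument
  obtain ⟨-, ε₀, hε₀, hball⟩ := hn x₀ hx₀
  have hS : 0 ≤ ∑ i, n x₀ i * pd T i x₀ := by
    by_cases hdiff : DifferentiableAt ℝ T x₀
    · have hder : HasDerivAt (fun t : ℝ => T (x₀ + t • n x₀)) (fderiv ℝ T x₀ (n x₀)) 0 := by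
        have := line_hasDerivAt T x₀ (n x₀) 0 (by simpa using hdiff)
        simpa using this
      have hd0 : 0 ≤ fderiv ℝ T x₀ (n x₀) := by
        have hslope := hasDerivAt_iff_tendsto_slope.1 hder
        have h2 : Tendsto (slope (fun t : ℝ => T (x₀ + t • n x₀)) 0) (nhdsWithin 0 (Iio 0))
            (nhds (fderiv ℝ T x₀ (n x₀))) :=
          hslope.mono_left (nhdsWithin_mono _ fun t ht => ne_of_lt ht)
        refine ge_of_tendsto h2 ?_
        filter_upwards [Ioo_mem_nhdsLT (neg_lt_zero.2 hε₀)] with t ht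
        have htneg : t < 0 := ht.2
        have hmem : x₀ + t • n x₀ ∈ Ω := by
          have := (hball (-t) ⟨neg_pos.2 htneg, by linarith [ht.1]⟩).2
          simpa [sub_eq_add_neg, neg_smul] using this
        have hle : T (x₀ + t • n x₀) ≤ T x₀ := hkey _ (subset_closure hmem)
        have hs : slope (fun t : ℝ => T (x₀ + t • n x₀)) 0 t
            = (T (x₀ + t • n x₀) - T x₀) / t := by
          simp [slope_def_field]
        rw [hs]
        exact div_nonneg_iff.2 (Or.inr ⟨by linarith, htneg.le⟩)
      have hexp : fderiv ℝ T x₀ (n x₀) = ∑ i, n x₀ i * pd T i x₀ := by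
        conv_lhs => rw [← Finset.univ_sum_single (n x₀), map_sum]
        refine Finset.sum_congr rfl fun i _ => ?_
        have hsingle : Pi.single i (n x₀ i) = (n x₀ i) • (Pi.single i 1 : Fin 3 → ℝ) := by
          funext j
          rcases eq_or_ne j i with rfl | h
          · simp
          · simp [Pi.single_eq_of_ne h]
        rw [hsingle, (fderiv ℝ T x₀).map_smul, smul_eq_mul]
        rfl
      rw [← hexp]
      exact hd0
    · have h0 : fderiv ℝ T x₀ = 0 := fderiv_zero_of_not_differentiableAt hdiff
      simp [pd, h0]
  have hLHS : -(k * ∑ i, n x₀ i * pd T i x₀) ≤ 0 := by nlinarith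
  have hx₀le : T x₀ ≤ Tbl := by
    have hx₀' : x₀ ∈ Γbody ∪ Γamb := by rw [hΓ]; exact hx₀
    rcases hx₀' with h | h
    · have := hRbody x₀ h
      nlinarith
    · have := hRamb x₀ h
      nlinarith
  exact (hkey x (subset_closure hx)).trans hx₀le
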